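/- Let F : ℝⁿ → ℝ be μ-strongly convex (μ > 0) with minimizer x*. Consider the τ-step proximal point iteration x^{(k+1)} = prox_{βF}(Σ_{i=1}^τ ξ_i x^{(k-τ+i)}) with β > 0, Σ_{i=1}^τ ξ_i = 1 and ξ_i ≥ 0 for all i. Then ‖x^{(k)} - x*‖ ≤ (1/(1+βμ))^{⌊k/τ⌋} · max_{0 ≤ j ≤ τ-1} ‖x^{(j)} - x*‖. -/

import Mathlib

open Set

section aux

variable {E : Type*} [NormedAddCommGroup E] [InnerProductSpace ℝ E]

/-- convex combination norm-square identity -/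
lemma comb_norm_sq (u v : E) {a b : ℝ} (hab : a + b = 1) :
    ‖a • u + b • v‖ ^ 2 = a * ‖u‖ ^ 2 + b * ‖v‖ ^ 2 - a * b * ‖u - v‖ ^ 2 := by
  rw [norm_add_sq_real, norm_sub_sq_real, norm_smul, norm_smul, real_inner_smul_left,
    real_inner_smul_right, mul_pow, mul_pow, Real.norm_eq_abs, Real.norm_eq_abs, sq_abs, sq_abs]
  obtain rfl := eq_sub_of_add_eq hab
  ring

/-- quadratic growth of a strongly convex function at its minimizer -/
lemma minOn_sc {m : ℝ} {G : E → ℝ} (hG : StrongConvexOn Set.univ m G) {w : E}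
    (hw : IsMinOn G Set.univ w) (v : E) : G w + m / 2 * ‖v - w‖ ^ 2 ≤ G v := by
  by_contra h
  push_neg at h
  have hc : G w ≤ G v := isMinOn_iff.mp hw v (mem_univ v)
  set D : ℝ := m / 2 * ‖v - w‖ ^ 2 with hDdef
  set c : ℝ := G v - G w with hcdef
  have hcD : c < D := by simp only [hcdef, hDdef]; linarith
  have hc0 : 0 ≤ c := by simp only [hcdef]; linarith
  have hD : 0 < D := lt_of_le_of_lt hc0 hcD
  set t : ℝ := (D - c) / (2 * D) with htdef
  have ht0 : 0 < t := div_pos (by linarith) (by positivity)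
  have ht1 : t ≤ 1 := by
    rw [htdef, div_le_one (by positivity)]; linarith
  have hconv := hG.2 (mem_univ v) (mem_univ w) ht0.le (by linarith : (0:ℝ) ≤ 1 - t)
    (by ring)
  have hmin : G w ≤ G (t • v + (1 - t) • w) := isMinOn_iff.mp hw _ (mem_univ _)
  simp only [smul_eq_mul, ← hDdef] at hconv
  -- from hmin and hconv: 0 ≤ t*c - t*(1-t)*D
  have key : 0 ≤ t * c - t * (1 - t) * D := by
    simp only [hcdef]; nlinarith [hconv, hmin]
  -- so c ≥ (1-t) * D
  have h1 : (1 - t) * D ≤ c := by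
    have := (mul_le_mul_iff_right₀ ht0).mp (by linarith : t * ((1 - t) * D) ≤ t * c)
    linarith
  have ht : 1 - t = (D + c) / (2 * D) := by
    rw [htdef]; field_simp; ring
  have h2 : (D + c) * D ≤ c * (2 * D) := by
    rw [ht, div_mul_eq_mul_div, div_le_iff₀ (by positivity)] at h1
    exact h1
  nlinarith [h2, hD, hcD]

/-- single-step contraction of the proximal point operator -/
lemma prox_contract (μ β : ℝ) (hμ : 0 < μ) (hβ : 0 < β) (F : E → ℝ)
    (hsc : StrongConvexOn Set.univ μ F) (xstar : E) (hmin : IsMinOn F Set.univ xstar)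
    (y p : E) (hp : IsMinOn (fun z => F z + 1 / (2 * β) * ‖z - y‖ ^ 2) Set.univ p) :
    ‖p - xstar‖ ≤ 1 / (1 + β * μ) * ‖y - xstar‖ := by
  set G : E → ℝ := fun z => F z + 1 / (2 * β) * ‖z - y‖ ^ 2 with hGdef
  -- the quadratic part is (1/β)-strongly convex
  have hq : UniformConvexOn Set.univ (fun r => (1 / β) / 2 * r ^ 2)
      (fun z => 1 / (2 * β) * ‖z - y‖ ^ 2) := by
    refine ⟨convex_univ, fun u _ v _ a b ha hb hab => le_of_eq ?_⟩
    have hyy : a • u + b • v - y = a • (u - y) + b • (v - y) := by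
      have h1 : a • y + b • y = y := by rw [← add_smul, hab, one_smul]
      have h2 : a • (u - y) + b • (v - y) = a • u + b • v - (a • y + b • y) := by
        rw [smul_sub, smul_sub]; abel
      rw [h2, h1]
    simp only [smul_eq_mul]
    rw [hyy, comb_norm_sq (u - y) (v - y) hab,
      show u - y - (v - y) = u - v by abel]
    field_simp
  have hG : StrongConvexOn Set.univ (μ + 1 / β) G := by
    have := hsc.add hq
    unfold StrongConvexOn
    convert this using 2 with r
    simp only [Pi.add_apply]
    ring
    rfl
  have h1 := minOn_sc hsc hmin p
  have h2 := minOn_sc hG hp xstar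
  simp only [hGdef] at h2
  rw [show xstar - p = -(p - xstar) by abel, norm_neg] at h2
  -- combine
  set u : E := p - xstar with hu
  set v : E := y - xstar with hv
  have hpy : p - y = u - v := by rw [hu, hv]; abel
  have hxy : xstar - y = -v := by rw [hv]; abel
  rw [hpy] at h2
  rw [hxy, norm_neg] at h2
  have hexp : ‖u - v‖ ^ 2 = ‖u‖ ^ 2 - 2 * inner ℝ u v + ‖v‖ ^ 2 := norm_sub_sq_real u v
  have hcs : inner ℝ u v ≤ ‖u‖ * ‖v‖ := real_inner_le_norm u v
  -- derive (1+βμ)‖u‖² ≤ ⟪u,v⟫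
  have key : (1 + β * μ) * ‖u‖ ^ 2 ≤ inner ℝ u v := by
    have hcomb : μ / 2 * ‖u‖ ^ 2 + (μ + 1 / β) / 2 * ‖u‖ ^ 2 + 1 / (2 * β) * ‖u - v‖ ^ 2
        ≤ 1 / (2 * β) * ‖v‖ ^ 2 := by linarith
    rw [hexp] at hcomb
    have hmul := mul_le_mul_of_nonneg_left hcomb (by positivity : (0:ℝ) ≤ 2 * β)
    have e1 : (2 * β) * (μ / 2 * ‖u‖ ^ 2 + (μ + 1 / β) / 2 * ‖u‖ ^ 2 +
        1 / (2 * β) * (‖u‖ ^ 2 - 2 * (inner ℝ u v : ℝ) + ‖v‖ ^ 2))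
        = 2 * β * μ * ‖u‖ ^ 2 + ‖u‖ ^ 2 + (‖u‖ ^ 2 - 2 * (inner ℝ u v : ℝ) + ‖v‖ ^ 2) := by
      field_simp; ring
    have e2 : (2 * β) * (1 / (2 * β) * ‖v‖ ^ 2) = ‖v‖ ^ 2 := by field_simp
    rw [e1, e2] at hmul
    linarith
  rcases eq_or_lt_of_le (norm_nonneg u) with h0 | h0
  · rw [← h0]
    positivity
  · have : (1 + β * μ) * ‖u‖ ≤ ‖v‖ := by
      have := le_trans key hcs
      nlinarith [h0]
    rw [div_mul_eq_mul_div, le_div_iff₀ (by positivity)]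
    linarith

end aux

theorem stmt6 (n : ℕ) (τ : ℕ) (hτ : 1 ≤ τ) (μ β : ℝ) (hμ : 0 < μ) (hβ : 0 < β)
    (ξ : ℕ → ℝ) (hξsum : ∑ i ∈ Finset.Icc 1 τ, ξ i = 1) (hξpos : ∀ i, 0 ≤ ξ i)
    (F : EuclideanSpace ℝ (Fin n) → ℝ)
    (hsc : StrongConvexOn Set.univ μ F)
    (xstar : EuclideanSpace ℝ (Fin n))
    (hmin : IsMinOn F Set.univ xstar)
    (x : ℕ → EuclideanSpace ℝ (Fin n))
    (hiter : ∀ k, τ ≤ k + 1 →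
      IsMinOn (fun z => F z +
        1 / (2 * β) * ‖z - ∑ i ∈ Finset.Icc 1 τ, ξ i • x (k + i - τ)‖ ^ 2)
        Set.univ (x (k + 1))) :
    ∀ k, ‖x k - xstar‖ ≤ (1 / (1 + β * μ)) ^ (k / τ) *
      (Finset.range τ).sup' (Finset.nonempty_range_iff.mpr (by omega))
        (fun j => ‖x j - xstar‖) := by
  set ρ : ℝ := 1 / (1 + β * μ) with hρdef
  have hρ0 : 0 < ρ := by rw [hρdef]; positivity
  have hρ1 : ρ ≤ 1 := by
    rw [hρdef, div_le_one (by positivity)]; nlinarith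
  set M : ℝ := (Finset.range τ).sup' (Finset.nonempty_range_iff.mpr (by omega))
      (fun j => ‖x j - xstar‖) with hMdef
  have hM0 : 0 ≤ M := le_trans (norm_nonneg (x 0 - xstar))
    (Finset.le_sup' (fun j => ‖x j - xstar‖) (Finset.mem_range.mpr (show 0 < τ from hτ)))
  intro k
  induction k using Nat.strong_induction_on with
  | _ k ih =>
    rcases lt_or_ge k τ with hk | hk
    · rw [Nat.div_eq_of_lt hk, pow_zero, one_mul]
      exact Finset.le_sup' (fun j => ‖x j - xstar‖) (Finset.mem_range.mpr hk)
    · -- k ≥ τ ≥ 1, write k = m + 1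
      obtain ⟨m, rfl⟩ : ∃ m, k = m + 1 := ⟨k - 1, by omega⟩
      have hp := hiter m (by omega)
      set y : EuclideanSpace ℝ (Fin n) := ∑ i ∈ Finset.Icc 1 τ, ξ i • x (m + i - τ)
        with hydef
      have hstep := prox_contract μ β hμ hβ F hsc xstar hmin y (x (m + 1)) hp
      have hy : y - xstar = ∑ i ∈ Finset.Icc 1 τ, ξ i • (x (m + i - τ) - xstar) := by
        rw [hydef]
        simp only [smul_sub, Finset.sum_sub_distrib, ← Finset.sum_smul, hξsum, one_smul]
      have hq : (m + 1) / τ = (m + 1 - τ) / τ + 1 := by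
        conv_lhs => rw [← Nat.sub_add_cancel hk]
        exact Nat.add_div_right _ (show 0 < τ by omega)
      set e : ℕ := (m + 1 - τ) / τ with hedef
      have hterm : ∀ i ∈ Finset.Icc 1 τ,
          ξ i * ‖x (m + i - τ) - xstar‖ ≤ ξ i * (ρ ^ e * M) := by
        intro i hi
        rw [Finset.mem_Icc] at hi
        have hlt : m + i - τ < m + 1 := by omega
        have hIH := ih (m + i - τ) hlt
        have hdiv : e ≤ (m + i - τ) / τ := by
          rw [hedef]
          exact Nat.div_le_div_right (by omega)
        have hpow : ρ ^ ((m + i - τ) / τ) ≤ ρ ^ e :=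
          pow_le_pow_of_le_one hρ0.le hρ1 hdiv
        exact mul_le_mul_of_nonneg_left
          (le_trans hIH (mul_le_mul_of_nonneg_right hpow hM0)) (hξpos i)
      have hsum : ‖y - xstar‖ ≤ ρ ^ e * M := by
        rw [hy]
        calc ‖∑ i ∈ Finset.Icc 1 τ, ξ i • (x (m + i - τ) - xstar)‖
            ≤ ∑ i ∈ Finset.Icc 1 τ, ‖ξ i • (x (m + i - τ) - xstar)‖ :=
              norm_sum_le _ _
          _ = ∑ i ∈ Finset.Icc 1 τ, ξ i * ‖x (m + i - τ) - xstar‖ := by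
              refine Finset.sum_congr rfl fun i _ => ?_
              rw [norm_smul, Real.norm_eq_abs, abs_of_nonneg (hξpos i)]
          _ ≤ ∑ i ∈ Finset.Icc 1 τ, ξ i * (ρ ^ e * M) := Finset.sum_le_sum hterm
          _ = ρ ^ e * M := by rw [← Finset.sum_mul, hξsum, one_mul]
      calc ‖x (m + 1) - xstar‖ ≤ ρ * ‖y - xstar‖ := hstep
        _ ≤ ρ * (ρ ^ e * M) := mul_le_mul_of_nonneg_left hsum hρ0.le
        _ = ρ ^ ((m + 1) / τ) * M := by rw [hq, pow_succ]; ring
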